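/- arXiv:1405.2295 — 7 statements merged into one kernel-verified Lean document; each statement's English description precedes it below -/
import Mathlib

section
/- Let P > 0, g > 0, I_b > 0, and let K be a natural number. For each k ∈ {1, …, K} let I_k : {0,1}^k → ℝ be a nonnegative function, and define the averages Ī_k = 2^{-k} · Σ_{v ∈ {0,1}^k} I_k(v). Then (1/2^K) · Σ_{(u_1,…,u_K) ∈ {0,1}^K} log(1 + P·g / (I_b + Σ_{k=1}^K I_k(u_1,…,u_k))) ≥ log(1 + P·g / (I_b + Σ_{k=1}^K Ī_k)). (This is the key inequality of Lemma 3: the time-shared rate over a slot with piecewise-constant interference is lower bounded by the rate computed with the time-averaged interference of each cluster class.) -/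
open Finset

lemma sum_restrict {K m : ℕ} (hm : m ≤ K) (F : (Fin m → Bool) → ℝ) :
    ∑ u : Fin K → Bool, F (fun i => u (Fin.castLE hm i))
      = 2 ^ (K - m) * ∑ v : Fin m → Bool, F v := by
  obtain ⟨n, rfl⟩ := Nat.exists_eq_add_of_le hm
  let e : (Fin (m + n) → Bool) ≃ (Fin m → Bool) × (Fin n → Bool) :=
    (Equiv.arrowCongr finSumFinEquiv (Equiv.refl Bool)).symm.trans
      (Equiv.sumArrowEquivProdArrow _ _ _)
  rw [Fintype.sum_equiv e (fun u => F (fun i => u (Fin.castLE hm i))) (fun p => F p.1) ?_]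
  · rw [Fintype.sum_prod_type]
    simp only [Finset.sum_const, Finset.card_univ, nsmul_eq_mul, Nat.add_sub_cancel_left]
    rw [← Finset.mul_sum]
    norm_num
  · intro u
    have h : (fun i => u (Fin.castLE hm i)) = (e u).1 := by
      funext i
      rfl
    simp only [h]

lemma convexOn_aux (b c : ℝ) (hb : 0 < b) (hc : 0 ≤ c) :
    ConvexOn ℝ (Set.Ici 0) (fun x => Real.log (b + c + x) - Real.log (b + x)) := by
  have hbc : 0 < b + c := by linarith
  apply convexOn_of_hasDerivWithinAt2_nonneg (convex_Ici 0)
    (f' := fun x => (b + c + x)⁻¹ - (b + x)⁻¹)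
    (f'' := fun x => ((b + x) ^ 2)⁻¹ - ((b + c + x) ^ 2)⁻¹)
  · intro x hx
    have hx' : (0:ℝ) ≤ x := hx
    have h1 : (0:ℝ) < b + c + x := by linarith
    have h2 : (0:ℝ) < b + x := by linarith
    exact ContinuousWithinAt.sub
      ((Real.continuousAt_log h1.ne').comp (by fun_prop) |>.continuousWithinAt)
      ((Real.continuousAt_log h2.ne').comp (by fun_prop) |>.continuousWithinAt)
  · intro x hx
    rw [interior_Ici] at hx
    have h1 : (0:ℝ) < b + c + x := by have := hx.out; linarith
    have h2 : (0:ℝ) < b + x := by have := hx.out; linarith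
    have d1 : HasDerivAt (fun x => Real.log (b + c + x)) ((b + c + x)⁻¹) x := by
      simpa using (((hasDerivAt_id x).const_add (b + c)).log h1.ne')
    have d2 : HasDerivAt (fun x => Real.log (b + x)) ((b + x)⁻¹) x := by
      simpa using (((hasDerivAt_id x).const_add b).log h2.ne')
    exact (d1.sub d2).hasDerivWithinAt
  · intro x hx
    rw [interior_Ici] at hx
    have h1 : (0:ℝ) < b + c + x := by have := hx.out; linarith
    have h2 : (0:ℝ) < b + x := by have := hx.out; linarith
    have d1 : HasDerivAt (fun x => (b + c + x)⁻¹) (-1 / (b + c + x) ^ 2) x := by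
      simpa using (((hasDerivAt_id x).const_add (b + c)).fun_inv h1.ne')
    have d2 : HasDerivAt (fun x => (b + x)⁻¹) (-1 / (b + x) ^ 2) x := by
      simpa using (((hasDerivAt_id x).const_add b).fun_inv h2.ne')
    have := (d1.fun_sub d2)
    convert this.hasDerivWithinAt using 1
    all_goals first | rfl | ring
  · intro x hx
    rw [interior_Ici] at hx
    have h1 : (0:ℝ) < b + c + x := by have := hx.out; linarith
    have h2 : (0:ℝ) < b + x := by have := hx.out; linarith
    have : ((b + c + x) ^ 2)⁻¹ ≤ ((b + x) ^ 2)⁻¹ := by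
      apply inv_anti₀ (by positivity)
      nlinarith
    linarith

/-- Key inequality of Lemma 3 (achievable rate with time-varying interference).
Let `P, g, I_b > 0` and `K : ℕ`.  For each `k ∈ {1, …, K}` (encoded as `k+1` for
`k : Fin K`), let `I (k+1) : ({0,1}^(k+1)) → ℝ` be a nonnegative function, and let
`Ī_k = 2^{-(k+1)} ∑_{v} I (k+1) v` be its average.  Then the average over all
binary strings `u ∈ {0,1}^K` of `log (1 + P g / (I_b + ∑_k I (k+1) (u₁,…,u_{k+1})))`
is at least `log (1 + P g / (I_b + ∑_k Ī_k))`. -/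
theorem timeshare_rate_ge_avg_interference_rate
    (P g Ib : ℝ) (hP : 0 < P) (hg : 0 < g) (hIb : 0 < Ib)
    (K : ℕ) (I : (k : ℕ) → (Fin k → Bool) → ℝ)
    (hI : ∀ k, 1 ≤ k → k ≤ K → ∀ v : Fin k → Bool, 0 ≤ I k v) :
    (1 / 2 ^ K) *
        ∑ u : Fin K → Bool,
          Real.log (1 + P * g /
            (Ib + ∑ k : Fin K, I (k.1 + 1) (fun i : Fin (k.1 + 1) => u (Fin.castLE k.isLt i))))
      ≥ Real.log (1 + P * g /
          (Ib + ∑ k : Fin K, (1 / 2 ^ (k.1 + 1)) * ∑ v : Fin (k.1 + 1) → Bool, I (k.1 + 1) v)) := by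
  have hc : 0 < P * g := mul_pos hP hg
  set c := P * g with hcdef
  set f : ℝ → ℝ := fun x => Real.log (Ib + c + x) - Real.log (Ib + x) with hfdef
  have hconv : ConvexOn ℝ (Set.Ici 0) f := convexOn_aux Ib c hIb hc.le
  have hlog : ∀ x : ℝ, 0 ≤ x → Real.log (1 + c / (Ib + x)) = f x := by
    intro x hx
    have h2 : (0:ℝ) < Ib + x := by linarith
    have h3 : 1 + c / (Ib + x) = (Ib + c + x) / (Ib + x) := by
      field_simp
      ring
    rw [h3, Real.log_div (by positivity) h2.ne']
  set S : (Fin K → Bool) → ℝ := fun u =>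
    ∑ k : Fin K, I (k.1 + 1) (fun i : Fin (k.1 + 1) => u (Fin.castLE k.isLt i)) with hSdef
  have hS0 : ∀ u, 0 ≤ S u := fun u =>
    Finset.sum_nonneg fun k _ => hI _ (by omega) k.isLt _
  set A : ℝ := ∑ k : Fin K, (1 / 2 ^ (k.1 + 1) : ℝ) * ∑ v : Fin (k.1 + 1) → Bool, I (k.1 + 1) v
    with hAdef
  have hA0 : 0 ≤ A := Finset.sum_nonneg fun k _ => by
    have := Finset.sum_nonneg fun (v : Fin (k.1 + 1) → Bool) (_ : v ∈ Finset.univ) =>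
      hI (k.1 + 1) (by omega) k.isLt v
    positivity
  have hw1 : ∑ _u : Fin K → Bool, (1 / 2 ^ K : ℝ) = 1 := by
    simp only [Finset.sum_const, Finset.card_univ, nsmul_eq_mul]
    norm_num [Fintype.card_fun]
  have havg : ∑ u : Fin K → Bool, (1 / 2 ^ K : ℝ) • S u = A := by
    simp only [smul_eq_mul, hSdef, hAdef, ← Finset.mul_sum]
    rw [Finset.sum_comm, Finset.mul_sum]
    refine Finset.sum_congr rfl fun k _ => ?_
    rw [sum_restrict (show k.1 + 1 ≤ K from k.isLt) (I (k.1 + 1))]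
    have h2 : (2:ℝ) ^ K = 2 ^ (K - (k.1 + 1)) * 2 ^ (k.1 + 1) := by
      rw [← pow_add]; congr 1; omega
    rw [h2]
    have := pow_pos (show (0:ℝ) < 2 by norm_num)
    field_simp
  have hj := hconv.map_sum_le (t := Finset.univ) (w := fun _ => (1 / 2 ^ K : ℝ)) (p := S)
      (fun _ _ => by positivity) hw1 (fun u _ => hS0 u)
  rw [havg] at hj
  have hLHS : ∑ u : Fin K → Bool,
      Real.log (1 + c / (Ib + S u)) = ∑ u : Fin K → Bool, f (S u) :=
    Finset.sum_congr rfl fun u _ => hlog (S u) (hS0 u)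
  calc Real.log (1 + c / (Ib + A)) = f A := hlog A hA0
    _ ≤ ∑ u : Fin K → Bool, (1 / 2 ^ K : ℝ) • f (S u) := hj
    _ = (1 / 2 ^ K) * ∑ u : Fin K → Bool, f (S u) := by
        simp only [smul_eq_mul, ← Finset.mul_sum]
    _ = (1 / 2 ^ K) * ∑ u : Fin K → Bool, Real.log (1 + c / (Ib + S u)) := by rw [hLHS]
end

section
/- Let μ > 0, let L and M be positive integers, and let p_A and p_V be probability mass functions on {1, …, L}. On a probability space, let N be a Poisson random variable with mean μ, let (A_{i,j})_{i ∈ ℕ, 1 ≤ j ≤ M} be an i.i.d. family of {1,…,L}-valued random variables with common law p_A, and let V be a {1,…,L}-valued random variable with law p_V, with N, (A_{i,j}) and V mutually independent. Then the probability of a match, p_M = P(∃ i < N, ∃ j ∈ {1,…,M} : A_{i,j} = V), equals 1 − Σ_{v=1}^{L} p_V(v) · exp(−μ·(1 − (1 − p_A(v))^M)). -/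
open MeasureTheory ProbabilityTheory


lemma tsum_exp_series (x : ℝ) : ∑' n : ℕ, x ^ n / n.factorial = Real.exp x := by
  rw [Real.exp_eq_exp_ℝ, NormedSpace.exp_eq_tsum_div]

lemma poisson_key (μ q : ℝ) : ∀ n : ℕ,
    Real.exp (-μ) * μ ^ n / n.factorial * (1 - q ^ n)
      = Real.exp (-μ) * (μ ^ n / n.factorial) - Real.exp (-μ) * ((μ * q) ^ n / n.factorial) := by
  intro n; rw [mul_pow]; ring

lemma poisson_summable (μ q : ℝ) :
    Summable (fun n : ℕ => Real.exp (-μ) * μ ^ n / n.factorial * (1 - q ^ n)) := by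
  simp_rw [poisson_key]
  exact ((Real.summable_pow_div_factorial μ).mul_left _).sub
    ((Real.summable_pow_div_factorial (μ * q)).mul_left _)

lemma poisson_tail (μ q : ℝ) :
    ∑' n : ℕ, Real.exp (-μ) * μ ^ n / n.factorial * (1 - q ^ n)
      = 1 - Real.exp (-μ * (1 - q)) := by
  simp_rw [poisson_key]
  rw [Summable.tsum_sub ((Real.summable_pow_div_factorial μ).mul_left _)
      ((Real.summable_pow_div_factorial (μ * q)).mul_left _),
    tsum_mul_left, tsum_mul_left, tsum_exp_series, tsum_exp_series,
    ← Real.exp_add, ← Real.exp_add]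
  have : -μ + μ = 0 := by ring
  rw [this, Real.exp_zero]
  ring_nf

/-- Match-probability formula of Lemma 2: if `N` is Poisson with mean `μ`,
`(A i j)` (`i ∈ ℕ`, `j ∈ Fin M`) is an i.i.d. family of videos drawn from the
caching pmf `pA` on the library `Fin L`, `V` is a requested video drawn from the
popularity pmf `pV`, and `N`, `(A i j)` and `V` are mutually independent, then
the probability of a match, `P(∃ i < N, ∃ j, A i j = V)`, equals
`1 − ∑ v, pV v · exp (−μ (1 − (1 − pA v)^M))`. -/
theorem match_probability_formula
    {Ω : Type*} [MeasurableSpace Ω] (Pr : Measure Ω) [IsProbabilityMeasure Pr]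
    (μ : ℝ) (hμ : 0 < μ) (L M : ℕ) (hL : 0 < L) (hM : 0 < M)
    (pA pV : Fin L → ℝ)
    (hpA0 : ∀ w, 0 ≤ pA w) (hpA1 : ∑ w, pA w = 1)
    (hpV0 : ∀ w, 0 ≤ pV w) (hpV1 : ∑ w, pV w = 1)
    (N : Ω → ℕ) (A : ℕ → Fin M → Ω → Fin L) (V : Ω → Fin L)
    (hNmeas : Measurable N) (hAmeas : ∀ i j, Measurable (A i j)) (hVmeas : Measurable V)
    (hNdist : ∀ n : ℕ, Pr {ω | N ω = n}
      = ENNReal.ofReal (Real.exp (-μ) * μ ^ n / n.factorial))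
    (hAdist : ∀ i j w, Pr {ω | A i j ω = w} = ENNReal.ofReal (pA w))
    (hVdist : ∀ w, Pr {ω | V ω = w} = ENNReal.ofReal (pV w))
    (hindep : iIndepFun
      (m := fun _ : Unit ⊕ Unit ⊕ ℕ × Fin M => (inferInstance : MeasurableSpace ℕ))
      (Sum.elim (fun _ => N)
        (Sum.elim (fun _ ω => ((V ω : Fin L) : ℕ))
          (fun q ω => ((A q.1 q.2 ω : Fin L) : ℕ)))) Pr) :
    Pr {ω | ∃ i < N ω, ∃ j : Fin M, A i j ω = V ω}
      = ENNReal.ofReal (1 - ∑ v, pV v * Real.exp (-μ * (1 - (1 - pA v) ^ M))) := by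
  classical
  set Ev : Set Ω := {ω | ∃ i < N ω, ∃ j : Fin M, A i j ω = V ω} with hEv
  -- basic nonnegativity facts
  have hpAle : ∀ v : Fin L, pA v ≤ 1 := fun v => by
    rw [← hpA1]; exact Finset.single_le_sum (fun i _ => hpA0 i) (Finset.mem_univ v)
  have hq0 : ∀ v : Fin L, 0 ≤ (1 - pA v) ^ M := fun v =>
    pow_nonneg (by linarith [hpAle v]) M
  have hq1 : ∀ v : Fin L, (1 - pA v) ^ M ≤ 1 := fun v =>
    pow_le_one₀ (by linarith [hpAle v]) (by linarith [hpA0 v])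
  have hpN0 : ∀ n : ℕ, 0 ≤ Real.exp (-μ) * μ ^ n / n.factorial := fun n => by
    positivity
  -- measurability
  have hAcoe : ∀ i j, Measurable (fun ω => ((A i j ω : Fin L) : ℕ)) := fun i j =>
    measurable_from_top.comp (hAmeas i j)
  have hVcoe : Measurable (fun ω => ((V ω : Fin L) : ℕ)) :=
    measurable_from_top.comp hVmeas
  have hEvMeas : MeasurableSet Ev := by
    have : Ev = ⋃ (i : ℕ), ⋃ (j : Fin M), ({ω | i < N ω} ∩ {ω | A i j ω = V ω}) := by
      ext ω; simp only [hEv, Set.mem_setOf_eq, Set.mem_iUnion, Set.mem_inter_iff]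
      constructor
      · rintro ⟨i, hi, j, hj⟩; exact ⟨i, j, hi, hj⟩
      · rintro ⟨i, j, hi, hj⟩; exact ⟨i, hi, j, hj⟩
    rw [this]
    refine MeasurableSet.iUnion fun i => MeasurableSet.iUnion fun j => MeasurableSet.inter ?_ ?_
    · exact hNmeas measurableSet_Ioi
    · exact measurableSet_eq_fun (hAmeas i j) hVmeas
  -- the partition
  set Sp : ℕ × Fin L → Set Ω := fun p => {ω | N ω = p.1} ∩ {ω | V ω = p.2} with hSp
  have hSpMeas : ∀ p, MeasurableSet (Sp p) := fun p =>
    (hNmeas (measurableSet_singleton p.1)).inter (hVmeas (measurableSet_singleton p.2))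
  have hSpUnion : ⋃ p, Sp p = Set.univ := by
    ext ω; simp only [Set.mem_iUnion, Set.mem_univ, iff_true]
    exact ⟨(N ω, V ω), rfl, rfl⟩
  have hSpDisj : Pairwise (Function.onFun Disjoint fun p => Ev ∩ Sp p) := by
    intro p p' hpp'
    refine Set.disjoint_left.2 fun ω h1 h2 => hpp' ?_
    obtain ⟨-, hN1, hV1⟩ := h1
    obtain ⟨-, hN2, hV2⟩ := h2
    exact Prod.ext (hN1 ▸ hN2 ▸ rfl) (hV1 ▸ hV2 ▸ rfl)
  have hdecomp : Pr Ev = ∑' p : ℕ × Fin L, Pr (Ev ∩ Sp p) := by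
    rw [← measure_iUnion hSpDisj (fun p => hEvMeas.inter (hSpMeas p))]
    congr 1
    rw [← Set.inter_iUnion, hSpUnion, Set.inter_univ]
  -- independence computations
  have hC : ∀ (n : ℕ) (v : Fin L),
      Pr ({ω | N ω = n} ∩ ({ω | V ω = v} ∩ {ω | ∀ i < n, ∀ j : Fin M, A i j ω ≠ v}))
        = ENNReal.ofReal (Real.exp (-μ) * μ ^ n / n.factorial)
          * (ENNReal.ofReal (pV v) * ENNReal.ofReal (1 - pA v) ^ (n * M)) := by
    intro n v
    set F : Unit ⊕ Unit ⊕ ℕ × Fin M → Set Ω := Sum.elim (fun _ => N ⁻¹' {n})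
      (Sum.elim (fun _ => (fun ω => ((V ω : Fin L) : ℕ)) ⁻¹' {(v : ℕ)})
        (fun q => (fun ω => ((A q.1 q.2 ω : Fin L) : ℕ)) ⁻¹' ({(v : ℕ)}ᶜ))) with hF
    set T : Finset (Unit ⊕ Unit ⊕ ℕ × Fin M) :=
      (Finset.range n ×ˢ (Finset.univ : Finset (Fin M))).image
        (fun q => Sum.inr (Sum.inr q)) with hT
    set S : Finset (Unit ⊕ Unit ⊕ ℕ × Fin M) :=
      insert (Sum.inl ()) (insert (Sum.inr (Sum.inl ())) T) with hS
    have hmeas : ∀ i ∈ S, MeasurableSet[(inferInstance : MeasurableSpace ℕ).comap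
        ((Sum.elim (fun _ => N)
          (Sum.elim (fun _ ω => ((V ω : Fin L) : ℕ))
            (fun q ω => ((A q.1 q.2 ω : Fin L) : ℕ)))) i)] (F i) := by
      rintro (⟨⟩ | ⟨⟩ | ⟨i, j⟩) _
      · exact ⟨{n}, measurableSet_singleton n, rfl⟩
      · exact ⟨{(v : ℕ)}, measurableSet_singleton _, rfl⟩
      · exact ⟨{(v : ℕ)}ᶜ, (measurableSet_singleton _).compl, rfl⟩
    have hs : Sum.inl () ∉ insert (Sum.inr (Sum.inl ())) T := by simp [hT]
    have hs2 : (Sum.inr (Sum.inl ()) : Unit ⊕ Unit ⊕ ℕ × Fin M) ∉ T := by simp [hT]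
    have key := hindep.meas_biInter (S := S) (s := F) hmeas
    rw [hS, Finset.set_biInter_insert, Finset.set_biInter_insert,
      Finset.prod_insert hs, Finset.prod_insert hs2] at key
    rw [hT, Finset.set_biInter_finset_image, Finset.prod_image
      (by intro a _ b _ h; simpa using h)] at key
    have e1 : F (Sum.inl ()) = {ω | N ω = n} := rfl
    have e2 : F (Sum.inr (Sum.inl ())) = {ω | V ω = v} := by
      ext ω; simp [hF, Fin.val_eq_val]
    have e3 : ⋂ q ∈ Finset.range n ×ˢ (Finset.univ : Finset (Fin M)),
        F (Sum.inr (Sum.inr q)) = {ω | ∀ i < n, ∀ j : Fin M, A i j ω ≠ v} := by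
      ext ω
      simp only [Set.mem_iInter, Finset.mem_product, Finset.mem_range, Finset.mem_univ,
        and_true, Set.mem_setOf_eq, hF, Sum.elim_inr, Set.mem_preimage, Set.mem_compl_iff,
        Set.mem_singleton_iff, Fin.val_eq_val]
      constructor
      · intro h i hi j; exact h (i, j) hi
      · intro h q hq; exact h q.1 hq q.2
    have e4 : ∀ q : ℕ × Fin M, Pr (F (Sum.inr (Sum.inr q))) = ENNReal.ofReal (1 - pA v) := by
      intro q
      have hm : MeasurableSet {ω | A q.1 q.2 ω = v} :=
        (hAmeas q.1 q.2) (measurableSet_singleton v)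
      have e : F (Sum.inr (Sum.inr q)) = {ω | A q.1 q.2 ω = v}ᶜ := by
        ext ω; simp [hF, Fin.val_eq_val]
      rw [e, prob_compl_eq_one_sub hm, hAdist, ← ENNReal.ofReal_one,
        ← ENNReal.ofReal_sub _ (hpA0 v)]
    rw [e1, e2, e3] at key
    simp only [e4] at key
    rw [key, hNdist n, hVdist v, Finset.prod_const, Finset.card_product, Finset.card_range,
      Finset.card_univ, Fintype.card_fin]
  -- pair: Pr (Sp (n, v))
  have hPairC : ∀ (n : ℕ) (v : Fin L),
      Pr ({ω | N ω = n} ∩ {ω | V ω = v})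
        = ENNReal.ofReal (Real.exp (-μ) * μ ^ n / n.factorial) * ENNReal.ofReal (pV v) := by
    intro n v
    set F : Unit ⊕ Unit ⊕ ℕ × Fin M → Set Ω := Sum.elim (fun _ => N ⁻¹' {n})
      (Sum.elim (fun _ => (fun ω => ((V ω : Fin L) : ℕ)) ⁻¹' {(v : ℕ)})
        (fun _ => Set.univ)) with hF
    set S : Finset (Unit ⊕ Unit ⊕ ℕ × Fin M) :=
      insert (Sum.inl ()) {Sum.inr (Sum.inl ())} with hS
    have hmeas : ∀ i ∈ S, MeasurableSet[(inferInstance : MeasurableSpace ℕ).comap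
        ((Sum.elim (fun _ => N)
          (Sum.elim (fun _ ω => ((V ω : Fin L) : ℕ))
            (fun q ω => ((A q.1 q.2 ω : Fin L) : ℕ)))) i)] (F i) := by
      rintro (⟨⟩ | ⟨⟩ | ⟨i, j⟩) _
      · exact ⟨{n}, measurableSet_singleton n, rfl⟩
      · exact ⟨{(v : ℕ)}, measurableSet_singleton _, rfl⟩
      · exact ⟨Set.univ, MeasurableSet.univ, by simp [hF]⟩
    have hs : (Sum.inl () : Unit ⊕ Unit ⊕ ℕ × Fin M) ∉
        ({Sum.inr (Sum.inl ())} : Finset (Unit ⊕ Unit ⊕ ℕ × Fin M)) := by simp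
    have key := hindep.meas_biInter (S := S) (s := F) hmeas
    rw [hS, Finset.set_biInter_insert, Finset.set_biInter_singleton,
      Finset.prod_insert hs, Finset.prod_singleton] at key
    have e1 : F (Sum.inl ()) = {ω | N ω = n} := rfl
    have e2 : F (Sum.inr (Sum.inl ())) = {ω | V ω = v} := by
      ext ω; simp [hF, Fin.val_eq_val]
    rw [e1, e2] at key
    rw [key, hNdist n, hVdist v]
  -- per-cell value of the match probability
  have hcell : ∀ (n : ℕ) (v : Fin L),
      Pr (Ev ∩ Sp (n, v)) = ENNReal.ofReal
        (pV v * (Real.exp (-μ) * μ ^ n / n.factorial * (1 - ((1 - pA v) ^ M) ^ n))) := by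
    intro n v
    set C : Set Ω := {ω | ∀ i < n, ∀ j : Fin M, A i j ω ≠ v} with hCdef
    have hCm : MeasurableSet C := by
      have : C = ⋂ (i : ℕ), ⋂ (_ : i < n), ⋂ (j : Fin M), {ω | A i j ω = v}ᶜ := by
        ext ω; simp [hCdef]
      rw [this]
      exact MeasurableSet.iInter fun i => MeasurableSet.iInter fun _ =>
        MeasurableSet.iInter fun j => ((hAmeas i j) (measurableSet_singleton v)).compl
    have hsplit : Ev ∩ Sp (n, v) = Sp (n, v) \ C := by
      ext ω
      simp only [hEv, hSp, Set.mem_inter_iff, Set.mem_setOf_eq, Set.mem_diff, hCdef]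
      constructor
      · rintro ⟨⟨i, hi, j, hj⟩, hN, hV⟩
        exact ⟨⟨hN, hV⟩, fun h => h i (hN ▸ hi) j (hV ▸ hj)⟩
      · rintro ⟨⟨hN, hV⟩, h⟩
        push_neg at h
        obtain ⟨i, hi, j, hj⟩ := h
        exact ⟨⟨i, hN ▸ hi, j, hV ▸ hj⟩, hN, hV⟩
    have hadd : Pr (Sp (n, v) ∩ C) + Pr (Sp (n, v) \ C) = Pr (Sp (n, v)) :=
      measure_inter_add_diff _ hCm
    have hSpC : Pr (Sp (n, v) ∩ C)
        = ENNReal.ofReal (Real.exp (-μ) * μ ^ n / n.factorial * (pV v * (1 - pA v) ^ (n * M))) := by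
      have : Sp (n, v) ∩ C = {ω | N ω = n} ∩ ({ω | V ω = v} ∩ C) := by
        rw [hSp]; ac_rfl
      rw [this, hC n v, ← ENNReal.ofReal_pow (by linarith [hpAle v]),
        ← ENNReal.ofReal_mul (hpV0 v), ← ENNReal.ofReal_mul (hpN0 n)]
    have hSpv : Pr (Sp (n, v))
        = ENNReal.ofReal (Real.exp (-μ) * μ ^ n / n.factorial * pV v) := by
      rw [hSp, hPairC n v, ← ENNReal.ofReal_mul (hpN0 n)]
    have hle : Real.exp (-μ) * μ ^ n / n.factorial * (pV v * (1 - pA v) ^ (n * M))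
        ≤ Real.exp (-μ) * μ ^ n / n.factorial * pV v := by
      have h1 : (1 - pA v) ^ (n * M) ≤ 1 :=
        pow_le_one₀ (by linarith [hpAle v]) (by linarith [hpA0 v])
      have h2 : pV v * (1 - pA v) ^ (n * M) ≤ pV v := by
        nlinarith [hpV0 v, pow_nonneg (by linarith [hpAle v] : (0:ℝ) ≤ 1 - pA v) (n * M)]
      exact mul_le_mul_of_nonneg_left h2 (hpN0 n)
    have hfin : Pr (Sp (n, v) ∩ C) ≠ ⊤ := measure_ne_top _ _
    have : Pr (Sp (n, v) \ C) = Pr (Sp (n, v)) - Pr (Sp (n, v) ∩ C) := by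
      rw [← hadd, ENNReal.add_sub_cancel_left hfin]
    rw [hsplit, this, hSpv, hSpC,
      ← ENNReal.ofReal_sub _ (mul_nonneg (hpN0 n) (mul_nonneg (hpV0 v)
        (pow_nonneg (by linarith [hpAle v]) _)))]
    congr 1
    rw [← pow_mul]
    ring
  -- sum up
  rw [hdecomp]
  have hrw : ∑' p : ℕ × Fin L, Pr (Ev ∩ Sp p)
      = ∑' n : ℕ, ∑' v : Fin L, Pr (Ev ∩ Sp (n, v)) := by
    rw [← ENNReal.tsum_prod (f := fun n v => Pr (Ev ∩ Sp (n, v)))]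
  rw [hrw]
  have hq1' : ∀ v : Fin L, Real.exp (-μ * (1 - (1 - pA v) ^ M)) ≤ 1 := by
    intro v
    rw [Real.exp_le_one_iff]
    nlinarith [hq1 v, hμ]
  calc
    ∑' n : ℕ, ∑' v : Fin L, Pr (Ev ∩ Sp (n, v))
        = ∑' n : ℕ, ∑ v : Fin L, ENNReal.ofReal
            (pV v * (Real.exp (-μ) * μ ^ n / n.factorial * (1 - ((1 - pA v) ^ M) ^ n))) := by
          congr 1; ext n; rw [tsum_fintype]; exact Finset.sum_congr rfl fun v _ => hcell n v
    _ = ∑ v : Fin L, ∑' n : ℕ, ENNReal.ofReal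
            (pV v * (Real.exp (-μ) * μ ^ n / n.factorial * (1 - ((1 - pA v) ^ M) ^ n))) := by
          rw [Summable.tsum_finsetSum (fun _ _ => ENNReal.summable)]
    _ = ∑ v : Fin L, ENNReal.ofReal
            (pV v * (1 - Real.exp (-μ * (1 - (1 - pA v) ^ M)))) := by
          refine Finset.sum_congr rfl fun v _ => ?_
          have hnn : ∀ n : ℕ, 0 ≤ pV v *
              (Real.exp (-μ) * μ ^ n / n.factorial * (1 - ((1 - pA v) ^ M) ^ n)) := by
            intro n
            have h1 : ((1 - pA v) ^ M) ^ n ≤ 1 := pow_le_one₀ (hq0 v) (hq1 v)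
            exact mul_nonneg (hpV0 v) (mul_nonneg (hpN0 n) (by linarith))
          have hsummable : Summable (fun n : ℕ => pV v *
              (Real.exp (-μ) * μ ^ n / n.factorial * (1 - ((1 - pA v) ^ M) ^ n))) :=
            (poisson_summable μ ((1 - pA v) ^ M)).mul_left _
          rw [← ENNReal.ofReal_tsum_of_nonneg hnn hsummable, tsum_mul_left,
            poisson_tail μ ((1 - pA v) ^ M)]
    _ = ENNReal.ofReal (∑ v, pV v * (1 - Real.exp (-μ * (1 - (1 - pA v) ^ M)))) := by
          rw [ENNReal.ofReal_sum_of_nonneg]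
          intro v _
          have := hq1' v
          nlinarith [hpV0 v, Real.exp_pos (-μ * (1 - (1 - pA v) ^ M))]
    _ = ENNReal.ofReal (1 - ∑ v, pV v * Real.exp (-μ * (1 - (1 - pA v) ^ M))) := by
          congr 1
          simp_rw [mul_sub, mul_one, Finset.sum_sub_distrib, hpV1]
end

section
/- For all real numbers λ > 0, R_c > 0, δ ≥ 2·R_c, and p ∈ [0, 1], one has ((1 − exp(−λ·π·δ²)) / (π·δ²)) · π·R_c² · p ≤ 1/4. -/
open Real

/-- The global metric upper bound: for `λ > 0`, `R_c > 0`, `δ ≥ 2 R_c` and a match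
probability `p ∈ [0,1]`, the density of a type II Matérn hard-core process of
intensity `(1 - exp(-λπδ²))/(πδ²)` times the cluster area `πR_c²` times `p`
is at most `1/4`. -/
theorem matern_global_metric_le_quarter (lam Rc δ p : ℝ)
    (hlam : 0 < lam) (hRc : 0 < Rc) (hδ : 2 * Rc ≤ δ)
    (hp0 : 0 ≤ p) (hp1 : p ≤ 1) :
    ((1 - Real.exp (-(lam * π * δ ^ 2))) / (π * δ ^ 2)) * (π * Rc ^ 2) * p ≤ 1 / 4 := by
  have hδ0 : 0 < δ := lt_of_lt_of_le (by linarith) hδ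
  have hπδ : 0 < π * δ ^ 2 := by positivity
  have h2 : (1 - Real.exp (-(lam * π * δ ^ 2))) / (π * δ ^ 2) * (π * Rc ^ 2) * p ≤
      1 / (π * δ ^ 2) * (π * Rc ^ 2) * 1 := by
    have hpos : 0 ≤ (1 - Real.exp (-(lam * π * δ ^ 2))) / (π * δ ^ 2) := by
      apply div_nonneg _ hπδ.le
      have := Real.exp_le_one_iff.mpr (show -(lam * π * δ ^ 2) ≤ 0 by nlinarith [Real.pi_pos])
      linarith
    have hb : (1 - Real.exp (-(lam * π * δ ^ 2))) / (π * δ ^ 2) * (π * Rc ^ 2) ≤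
        1 / (π * δ ^ 2) * (π * Rc ^ 2) := by
      apply mul_le_mul_of_nonneg_right _ (by positivity)
      gcongr
      linarith [Real.exp_pos (-(lam * π * δ ^ 2))]
    calc (1 - Real.exp (-(lam * π * δ ^ 2))) / (π * δ ^ 2) * (π * Rc ^ 2) * p
        ≤ (1 - Real.exp (-(lam * π * δ ^ 2))) / (π * δ ^ 2) * (π * Rc ^ 2) * 1 :=
          mul_le_mul_of_nonneg_left hp1 (by positivity)
      _ ≤ 1 / (π * δ ^ 2) * (π * Rc ^ 2) * 1 := by
          exact mul_le_mul_of_nonneg_right hb (by norm_num)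
  have h3 : 1 / (π * δ ^ 2) * (π * Rc ^ 2) * 1 = Rc ^ 2 / δ ^ 2 := by
    field_simp
  have h4 : Rc ^ 2 / δ ^ 2 ≤ 1 / 4 := by
    rw [div_le_div_iff₀ (by positivity) (by norm_num)]
    nlinarith
  calc _ ≤ _ := h2
    _ = _ := h3
    _ ≤ _ := h4
end

section
/- Let X_1, …, X_n be i.i.d. nonnegative real random variables on a probability space, let β_1, …, β_n be nonnegative reals with Σ_{j=1}^n β_j = 1, and let s ≥ 0. Then E[exp(−s · Σ_{j=1}^n β_j X_j)] ≥ E[exp(−(s/n) · Σ_{j=1}^n X_j)]. -/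
open MeasureTheory ProbabilityTheory

private lemma integrable_exp_neg {Ω : Type*} [MeasurableSpace Ω] (μ : Measure Ω)
    [IsProbabilityMeasure μ] {Y : Ω → ℝ} (hY : Measurable Y) (hY0 : ∀ ω, 0 ≤ Y ω)
    {t : ℝ} (ht : t ≤ 0) : Integrable (fun ω => Real.exp (t * Y ω)) μ := by
  refine Integrable.mono' (integrable_const 1) ((hY.const_mul t).exp.aestronglyMeasurable) ?_
  filter_upwards with ω
  rw [Real.norm_eq_abs, abs_of_pos (Real.exp_pos _)]
  exact Real.exp_le_one_iff.mpr (mul_nonpos_of_nonpos_of_nonneg ht (hY0 ω))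

/-- Log-convexity step: for a nonneg rv `Y` and nonneg `t j` averaging appropriately,
`∫ exp (-(avg) Y) ≤ ∏ (∫ exp (-(t j) Y))^(1/n)`. -/
private lemma holder_step {Ω : Type*} [MeasurableSpace Ω] (μ : Measure Ω)
    [IsProbabilityMeasure μ] (n : ℕ) (hn : 0 < n) {Y : Ω → ℝ}
    (hY : Measurable Y) (hY0 : ∀ ω, 0 ≤ Y ω) (t : Fin n → ℝ) (ht : ∀ j, 0 ≤ t j) :
    ∫ ω, Real.exp (-((∑ j, t j) / n * Y ω)) ∂μ
      ≤ ∏ j, (∫ ω, Real.exp (-(t j * Y ω)) ∂μ) ^ ((n : ℝ)⁻¹) := by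
  have hn' : (n : ℝ) ≠ 0 := Nat.cast_ne_zero.mpr hn.ne'
  have hint : ∀ j, Integrable (fun ω => Real.exp (-(t j * Y ω))) μ := by
    intro j
    have := integrable_exp_neg μ hY hY0 (t := -(t j)) (neg_nonpos.mpr (ht j))
    simpa [neg_mul] using this
  have hintavg : Integrable (fun ω => Real.exp (-((∑ j, t j) / n * Y ω))) μ := by
    have h0 : -((∑ j, t j) / n) ≤ 0 := by
      refine neg_nonpos.mpr (div_nonneg (Finset.sum_nonneg fun j _ => ht j) (Nat.cast_nonneg n))
    have := integrable_exp_neg μ hY hY0 h0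
    simpa [neg_mul] using this
  -- Hölder in ℝ≥0∞
  have key : ∫⁻ ω, ∏ j, (ENNReal.ofReal (Real.exp (-(t j * Y ω)))) ^ ((n : ℝ)⁻¹) ∂μ
      ≤ ∏ j, (∫⁻ ω, ENNReal.ofReal (Real.exp (-(t j * Y ω))) ∂μ) ^ ((n : ℝ)⁻¹) := by
    refine ENNReal.lintegral_prod_norm_pow_le _ (fun j _ => ?_) ?_ (fun j _ => by positivity)
    · exact (((hY.const_mul (t j)).neg.exp).ennreal_ofReal).aemeasurable
    · simp [Finset.sum_const, hn']
  -- identify the left side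
  have hLHS : ∀ ω, ∏ j, (ENNReal.ofReal (Real.exp (-(t j * Y ω)))) ^ ((n : ℝ)⁻¹)
      = ENNReal.ofReal (Real.exp (-((∑ j, t j) / n * Y ω))) := by
    intro ω
    have : ∀ j, (ENNReal.ofReal (Real.exp (-(t j * Y ω)))) ^ ((n : ℝ)⁻¹)
        = ENNReal.ofReal (Real.exp (-(t j * Y ω) * (n : ℝ)⁻¹)) := by
      intro j
      rw [ENNReal.ofReal_rpow_of_pos (Real.exp_pos _), ← Real.exp_mul]
    rw [Finset.prod_congr rfl (fun j _ => this j),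
      ← ENNReal.ofReal_prod_of_nonneg (fun j _ => (Real.exp_pos _).le),
      ← Real.exp_sum]
    congr 2
    rw [← Finset.sum_mul, Finset.sum_neg_distrib, ← Finset.sum_mul]
    field_simp
  calc ∫ ω, Real.exp (-((∑ j, t j) / n * Y ω)) ∂μ
      = (∫⁻ ω, ENNReal.ofReal (Real.exp (-((∑ j, t j) / n * Y ω))) ∂μ).toReal := by
        rw [← ofReal_integral_eq_lintegral_ofReal hintavg
          (Filter.Eventually.of_forall fun ω => (Real.exp_pos _).le), ENNReal.toReal_ofReal]
        exact integral_nonneg fun ω => (Real.exp_pos _).le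
    _ ≤ (∏ j, (∫⁻ ω, ENNReal.ofReal (Real.exp (-(t j * Y ω))) ∂μ) ^ ((n : ℝ)⁻¹)).toReal := by
        refine ENNReal.toReal_mono ?_ ?_
        · refine (ENNReal.prod_lt_top ?_).ne
          intro j _
          refine ENNReal.rpow_lt_top_of_nonneg (by positivity) ?_
          rw [← ofReal_integral_eq_lintegral_ofReal (hint j)
            (Filter.Eventually.of_forall fun ω => (Real.exp_pos _).le)]
          exact ENNReal.ofReal_ne_top
        · calc ∫⁻ ω, ENNReal.ofReal (Real.exp (-((∑ j, t j) / n * Y ω))) ∂μ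
              = ∫⁻ ω, ∏ j, (ENNReal.ofReal (Real.exp (-(t j * Y ω)))) ^ ((n : ℝ)⁻¹) ∂μ := by
                exact lintegral_congr fun ω => (hLHS ω).symm
            _ ≤ _ := key
    _ = ∏ j, (∫ ω, Real.exp (-(t j * Y ω)) ∂μ) ^ ((n : ℝ)⁻¹) := by
        rw [ENNReal.toReal_prod]
        refine Finset.prod_congr rfl fun j _ => ?_
        rw [← ofReal_integral_eq_lintegral_ofReal (hint j)
          (Filter.Eventually.of_forall fun ω => (Real.exp_pos _).le),
          ← ENNReal.toReal_rpow, ENNReal.toReal_ofReal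
          (integral_nonneg fun ω => (Real.exp_pos _).le)]

/-- Laplace-transform form of the second-order stochastic dominance comparison
(Lemma 4): for i.i.d. nonnegative random variables `X₁, …, Xₙ`, nonnegative weights
`β₁, …, βₙ` summing to one, and `s ≥ 0`,
`E[exp (−s ∑ βⱼ Xⱼ)] ≥ E[exp (−(s/n) ∑ Xⱼ)]`. -/
theorem laplace_weighted_ge_laplace_avg
    {Ω : Type*} [MeasurableSpace Ω] (μ : Measure Ω) [IsProbabilityMeasure μ]
    (n : ℕ) (hn : 0 < n) (X : Fin n → Ω → ℝ)
    (hXmeas : ∀ j, Measurable (X j)) (hXnonneg : ∀ j ω, 0 ≤ X j ω)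
    (hindep : iIndepFun X μ)
    (hident : ∀ i j, IdentDistrib (X i) (X j) μ μ)
    (β : Fin n → ℝ) (hβ0 : ∀ j, 0 ≤ β j) (hβ1 : ∑ j, β j = 1)
    (s : ℝ) (hs : 0 ≤ s) :
    ∫ ω, Real.exp (-(s * ∑ j, β j * X j ω)) ∂μ
      ≥ ∫ ω, Real.exp (-((s / n) * ∑ j, X j ω)) ∂μ := by
  classical
  have hn' : (n : ℝ) ≠ 0 := Nat.cast_ne_zero.mpr hn.ne'
  set X₀ := X ⟨0, hn⟩ with hX₀
  -- mgf of X j at t equals mgf of X₀ at t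
  have hmgf_eq : ∀ (j : Fin n) (t : ℝ), mgf (X j) μ t = mgf X₀ μ t := by
    intro j t
    have hm : Measurable fun x : ℝ => Real.exp (t * x) :=
      (measurable_const.mul measurable_id).exp
    have h := ((hident j ⟨0, hn⟩).comp hm).integral_eq
    simpa [mgf, Function.comp] using h
  -- LHS as product of mgfs
  have hY : iIndepFun (fun j ω => β j * X j ω) μ := by
    exact hindep.comp (fun j (x : ℝ) => β j * x)
      (fun j => measurable_const.mul measurable_id)
  have hLHS : ∫ ω, Real.exp (-(s * ∑ j, β j * X j ω)) ∂μ
      = ∏ j, mgf X₀ μ (-(s * β j)) := by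
    have h1 : ∫ ω, Real.exp (-(s * ∑ j, β j * X j ω)) ∂μ
        = mgf (∑ j, fun ω => β j * X j ω) μ (-s) := by
      unfold mgf
      refine integral_congr_ae (Filter.Eventually.of_forall fun ω => ?_)
      simp [Finset.sum_apply, neg_mul]
    rw [h1, hY.mgf_sum (fun j => (hXmeas j).const_mul (β j))]
    refine Finset.prod_congr rfl fun j _ => ?_
    rw [← hmgf_eq j]
    unfold mgf
    refine integral_congr_ae (Filter.Eventually.of_forall fun ω => ?_)
    ring_nf
  -- RHS as a power of mgf
  have hRHS : ∫ ω, Real.exp (-((s / n) * ∑ j, X j ω)) ∂μ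
      = ∏ _j : Fin n, mgf X₀ μ (-(s / n)) := by
    have h1 : ∫ ω, Real.exp (-((s / n) * ∑ j, X j ω)) ∂μ
        = mgf (∑ j, X j) μ (-(s / n)) := by
      unfold mgf
      refine integral_congr_ae (Filter.Eventually.of_forall fun ω => ?_)
      simp [Finset.sum_apply, neg_mul]
    rw [h1, hindep.mgf_sum hXmeas]
    exact Finset.prod_congr rfl fun j _ => hmgf_eq j _
  rw [hLHS, hRHS, ge_iff_le]
  -- now the key inequality
  have hX₀meas : Measurable X₀ := hXmeas _
  have hX₀0 : ∀ ω, 0 ≤ X₀ ω := hXnonneg _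
  have hkey := holder_step μ n hn hX₀meas hX₀0 (fun j => s * β j)
    (fun j => mul_nonneg hs (hβ0 j))
  have hsum : (∑ j, s * β j) / (n : ℝ) = s / n := by
    rw [← Finset.mul_sum, hβ1, mul_one]
  rw [hsum] at hkey
  have hmgf1 : mgf X₀ μ (-(s / n)) = ∫ ω, Real.exp (-((s / n) * X₀ ω)) ∂μ := by
    unfold mgf; simp [neg_mul]
  have hmgf2 : ∀ j, mgf X₀ μ (-(s * β j)) = ∫ ω, Real.exp (-(s * β j * X₀ ω)) ∂μ := by
    intro j; unfold mgf; simp [neg_mul]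
  calc ∏ _j : Fin n, mgf X₀ μ (-(s / n))
      = (∫ ω, Real.exp (-((s / n) * X₀ ω)) ∂μ) ^ n := by
        rw [Finset.prod_const, Finset.card_univ, Fintype.card_fin, hmgf1]
    _ ≤ (∏ j, (∫ ω, Real.exp (-(s * β j * X₀ ω)) ∂μ) ^ ((n : ℝ)⁻¹)) ^ n := by
        refine pow_le_pow_left₀ (integral_nonneg fun ω => (Real.exp_pos _).le) hkey n
    _ = ∏ j, mgf X₀ μ (-(s * β j)) := by
        rw [← Finset.prod_pow]
        refine Finset.prod_congr rfl fun j _ => ?_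
        rw [hmgf2 j, ← Real.rpow_natCast ((∫ ω, Real.exp (-(s * β j * X₀ ω)) ∂μ) ^ ((n:ℝ)⁻¹)) n,
          ← Real.rpow_mul (integral_nonneg fun ω => (Real.exp_pos _).le),
          inv_mul_cancel₀ hn', Real.rpow_one]
end

section
/- Let X_1, …, X_n be i.i.d. nonnegative integrable real random variables on a probability space, let β_1, …, β_n be nonnegative reals with Σ_{j=1}^n β_j = 1, and let φ : ℝ → ℝ be a monotone increasing concave function such that φ((1/n)·Σ_{j=1}^n X_j) and φ(Σ_{j=1}^n β_j X_j) are both integrable. Then E[φ((1/n)·Σ_{j=1}^n X_j)] ≥ E[φ(Σ_{j=1}^n β_j X_j)]. -/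
open MeasureTheory ProbabilityTheory

/-- Second-order stochastic dominance of the equally weighted average over any
convex combination of i.i.d. nonnegative integrable random variables: for every
monotone increasing concave `φ` (with both compositions integrable),
`E[φ((1/n) ∑ Xⱼ)] ≥ E[φ(∑ βⱼ Xⱼ)]`. -/
theorem avg_ssd_weighted_sum
    {Ω : Type*} [MeasurableSpace Ω] (μ : Measure Ω) [IsProbabilityMeasure μ]
    (n : ℕ) (hn : 0 < n) (X : Fin n → Ω → ℝ)
    (hXmeas : ∀ j, Measurable (X j)) (hXnonneg : ∀ j ω, 0 ≤ X j ω)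
    (hXint : ∀ j, Integrable (X j) μ)
    (hindep : iIndepFun X μ)
    (hident : ∀ i j, IdentDistrib (X i) (X j) μ μ)
    (β : Fin n → ℝ) (hβ0 : ∀ j, 0 ≤ β j) (hβ1 : ∑ j, β j = 1)
    (φ : ℝ → ℝ) (hφmono : Monotone φ) (hφconc : ConcaveOn ℝ Set.univ φ)
    (hint₁ : Integrable (fun ω => φ ((1 / n) * ∑ j, X j ω)) μ)
    (hint₂ : Integrable (fun ω => φ (∑ j, β j * X j ω)) μ) :
    ∫ ω, φ ((1 / n) * ∑ j, X j ω) ∂μ ≥ ∫ ω, φ (∑ j, β j * X j ω) ∂μ := by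
  haveI : NeZero n := ⟨hn.ne'⟩
  set ν : Measure ℝ := μ.map (X 0) with hν
  haveI : IsProbabilityMeasure ν := Measure.isProbabilityMeasure_map (hXmeas 0).aemeasurable
  have hmarg : ∀ j, μ.map (X j) = ν := fun j => (hident j 0).map_eq
  have hφmeas : Measurable φ := hφmono.measurable
  have hVmeas : ∀ e : Fin n ≃ Fin n, Measurable (fun ω => fun j => X (e j) ω) :=
    fun e => measurable_pi_lambda _ fun j => hXmeas (e j)
  -- The joint law of any permuted version of the family is the product measure `pi ν`.
  have key : ∀ e : Fin n ≃ Fin n,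
      μ.map (fun ω => fun j => X (e j) ω) = Measure.pi (fun _ => ν) := by
    intro e
    refine (Measure.pi_eq fun s hs => ?_).symm
    rw [Measure.map_apply (hVmeas e) (MeasurableSet.univ_pi hs)]
    have hpre : (fun ω => fun j => X (e j) ω) ⁻¹' (Set.univ.pi s)
        = ⋂ k, X k ⁻¹' s (e.symm k) := by
      ext ω
      simp only [Set.mem_preimage, Set.mem_univ_pi, Set.mem_iInter]
      constructor
      · intro h k
        simpa using h (e.symm k)
      · intro h j
        simpa using h (e j)
    have hbi : (⋂ k ∈ (Finset.univ : Finset (Fin n)), X k ⁻¹' s (e.symm k))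
        = ⋂ k, X k ⁻¹' s (e.symm k) := by simp
    have hprod := hindep.measure_inter_preimage_eq_mul Finset.univ
      (sets := fun k => s (e.symm k)) (fun k _ => hs (e.symm k))
    rw [hpre, ← hbi, hprod]
    have hterm : ∀ k, μ (X k ⁻¹' s (e.symm k)) = ν (s (e.symm k)) := by
      intro k
      rw [← hmarg k, Measure.map_apply (hXmeas k) (hs (e.symm k))]
    calc ∏ k, μ (X k ⁻¹' s (e.symm k)) = ∏ k, ν (s (e.symm k)) := by
          exact Finset.prod_congr rfl fun k _ => hterm k
      _ = ∏ j, ν (s j) := Equiv.prod_comp e.symm (fun j => ν (s j))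
      _ = ∏ j, (fun _ : Fin n => ν) j (s j) := rfl
  -- weighted-sum functional on the path space
  set f : (Fin n → ℝ) → ℝ := fun x => ∑ j, β j * x j with hf
  have hfmeas : Measurable f :=
    Finset.measurable_sum _ fun j _ => (measurable_pi_apply j).const_mul _
  -- identical distribution of all permuted weighted sums
  have hTmeas : ∀ e : Fin n ≃ Fin n, Measurable (fun ω => ∑ j, β j * X (e j) ω) :=
    fun e => Finset.measurable_sum _ fun j _ => (hXmeas (e j)).const_mul _
  have base : ∀ e : Fin n ≃ Fin n,
      IdentDistrib (fun ω => ∑ j, β j * X (e j) ω) (fun ω => ∑ j, β j * X j ω) μ μ := by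
    intro e
    refine ⟨(hTmeas e).aemeasurable, (hTmeas (Equiv.refl _)).aemeasurable, ?_⟩
    have h1 : (fun ω => ∑ j, β j * X (e j) ω) = f ∘ (fun ω => fun j => X (e j) ω) := rfl
    have h2 : (fun ω => ∑ j, β j * X j ω)
        = f ∘ (fun ω => fun j => X ((Equiv.refl (Fin n)) j) ω) := rfl
    rw [h1, h2, ← Measure.map_map hfmeas (hVmeas e),
      ← Measure.map_map hfmeas (hVmeas (Equiv.refl _)), key e, key (Equiv.refl _)]
  have hT : ∀ e : Fin n ≃ Fin n,
      IdentDistrib (fun ω => φ (∑ j, β j * X (e j) ω)) (fun ω => φ (∑ j, β j * X j ω)) μ μ :=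
    fun e => (base e).comp hφmeas
  -- the cyclic shifts
  set E : Fin n → (Fin n ≃ Fin n) := fun i => Equiv.addLeft i with hE
  have hTint : ∀ i : Fin n, Integrable (fun ω => φ (∑ j, β j * X (E i j) ω)) μ :=
    fun i => ((hT (E i)).integrable_iff).2 hint₂
  have hTintegral : ∀ i : Fin n,
      ∫ ω, φ (∑ j, β j * X (E i j) ω) ∂μ = ∫ ω, φ (∑ j, β j * X j ω) ∂μ :=
    fun i => (hT (E i)).integral_eq
  -- pointwise Jensen over the n cyclic shifts
  have hpoint : ∀ ω, ∑ i : Fin n, (1 / (n : ℝ)) • φ (∑ j, β j * X (E i j) ω)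
      ≤ φ ((1 / n) * ∑ j, X j ω) := by
    intro ω
    have hw0 : ∀ i ∈ (Finset.univ : Finset (Fin n)), (0 : ℝ) ≤ 1 / (n : ℝ) := by
      intro i _
      positivity
    have hw1 : ∑ _i : Fin n, (1 / (n : ℝ)) = 1 := by
      rw [Finset.sum_const, Finset.card_univ, Fintype.card_fin, nsmul_eq_mul]
      field_simp
    have hmem : ∀ i ∈ (Finset.univ : Finset (Fin n)),
        (∑ j, β j * X (E i j) ω) ∈ (Set.univ : Set ℝ) := fun _ _ => trivial
    have hjensen := hφconc.le_map_sum hw0 hw1 hmem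
    have havg : ∑ i : Fin n, (1 / (n : ℝ)) • (∑ j, β j * X (E i j) ω)
        = (1 / n) * ∑ j, X j ω := by
      simp only [smul_eq_mul, Finset.mul_sum]
      rw [Finset.sum_comm]
      have hrow : ∀ j : Fin n, ∑ i : Fin n, 1 / (n : ℝ) * (β j * X (E i j) ω)
          = β j * (1 / n * ∑ k, X k ω) := by
        intro j
        have hshift : ∑ i : Fin n, X (E i j) ω = ∑ k, X k ω := by
          have : ∀ i : Fin n, X (E i j) ω = X ((Equiv.addRight j) i) ω := by
            intro i
            simp [hE, Equiv.addLeft, Equiv.addRight, add_comm]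
          rw [Finset.sum_congr rfl fun i _ => this i]
          exact Fintype.sum_equiv (Equiv.addRight j) _ _ fun k => rfl
        calc ∑ i : Fin n, 1 / (n : ℝ) * (β j * X (E i j) ω)
            = 1 / (n : ℝ) * β j * ∑ i : Fin n, X (E i j) ω := by
              rw [Finset.mul_sum]
              exact Finset.sum_congr rfl fun i _ => by ring
          _ = β j * (1 / n * ∑ k, X k ω) := by rw [hshift]; ring
      rw [Finset.sum_congr rfl fun j _ => hrow j, ← Finset.sum_mul, hβ1, one_mul]
      exact Finset.mul_sum _ _ _
    rw [havg] at hjensen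
    exact hjensen
  -- integrate the pointwise inequality
  have hTint' : ∀ i : Fin n,
      Integrable (fun ω => (1 / (n : ℝ)) • φ (∑ j, β j * X (E i j) ω)) μ := fun i => by
    simpa [smul_eq_mul] using (hTint i).const_mul (1 / (n : ℝ))
  have hsumint : Integrable (fun ω => ∑ i : Fin n, (1 / (n : ℝ)) • φ (∑ j, β j * X (E i j) ω)) μ :=
    integrable_finset_sum _ fun i _ => hTint' i
  have hmain : ∫ ω, (∑ i : Fin n, (1 / (n : ℝ)) • φ (∑ j, β j * X (E i j) ω)) ∂μ
      ≤ ∫ ω, φ ((1 / n) * ∑ j, X j ω) ∂μ :=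
    integral_mono hsumint hint₁ hpoint
  have hcalc : ∫ ω, (∑ i : Fin n, (1 / (n : ℝ)) • φ (∑ j, β j * X (E i j) ω)) ∂μ
      = ∫ ω, φ (∑ j, β j * X j ω) ∂μ := by
    rw [integral_finset_sum _ fun i _ => hTint' i]
    have : ∀ i : Fin n, ∫ ω, (1 / (n : ℝ)) • φ (∑ j, β j * X (E i j) ω) ∂μ
        = (1 / (n : ℝ)) * ∫ ω, φ (∑ j, β j * X j ω) ∂μ := by
      intro i
      rw [integral_smul, hTintegral i, smul_eq_mul]
    rw [Finset.sum_congr rfl fun i _ => this i, Finset.sum_const, Finset.card_univ,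
      Fintype.card_fin, nsmul_eq_mul, ← mul_assoc]
    have hn' : (n : ℝ) ≠ 0 := Nat.cast_ne_zero.2 hn.ne'
    field_simp
  rw [hcalc] at hmain
  exact hmain
end

section
/- Let X_1, …, X_n be mutually independent nonnegative real random variables and Y_1, …, Y_n be mutually independent nonnegative real random variables, all on the same probability space. Suppose that for every i ∈ {1,…,n} and every bounded continuous monotone increasing concave function φ : ℝ → ℝ one has E[φ(X_i)] ≥ E[φ(Y_i)]. Then for all nonnegative reals β_1, …, β_n and every bounded continuous monotone increasing concave function φ : ℝ → ℝ, E[φ(Σ_{i=1}^n β_i X_i)] ≥ E[φ(Σ_{i=1}^n β_i Y_i)]. -/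
open MeasureTheory ProbabilityTheory

/-- A test function for second-order stochastic dominance: bounded continuous
monotone increasing concave. -/
def IsTest (φ : ℝ → ℝ) : Prop :=
  Continuous φ ∧ Monotone φ ∧ ConcaveOn ℝ Set.univ φ ∧ ∃ C, ∀ x, |φ x| ≤ C

lemma isTest_comp_affine {φ : ℝ → ℝ} (h : IsTest φ) (s b : ℝ) (hb : 0 ≤ b) :
    IsTest (fun t => φ (s + b * t)) := by
  obtain ⟨hc, hm, hcc, C, hC⟩ := h
  refine ⟨by continuity, fun x y hxy => hm (by nlinarith), ⟨convex_univ, ?_⟩, C, fun x => hC _⟩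
  intro x _ y _ a c ha hc' hac
  have key : s + b * (a • x + c • y) = a • (s + b * x) + c • (s + b * y) := by
    simp only [smul_eq_mul]
    linear_combination (-s) * hac
  show a • φ (s + b * x) + c • φ (s + b * y) ≤ φ (s + b * (a • x + c • y))
  rw [key]
  exact hcc.2 trivial trivial ha hc' hac

section aux

variable {Ω : Type*} [MeasurableSpace Ω] {μ : Measure Ω} [IsProbabilityMeasure μ]

lemma integrable_test {φ : ℝ → ℝ} (hc : Continuous φ) {C : ℝ} (hC : ∀ x, |φ x| ≤ C)
    {f : Ω → ℝ} (hf : Measurable f) : Integrable (fun ω => φ (f ω)) μ := by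
  refine Integrable.mono' (integrable_const C)
    ((hc.measurable.comp hf).aestronglyMeasurable) ?_
  filter_upwards with ω
  simpa [Real.norm_eq_abs] using hC (f ω)

/-- If `S` and `T` are independent, the expectation of `φ (S + T)` can be
computed by first integrating out `T`. -/
lemma indep_integral_add {S T : Ω → ℝ} (hS : Measurable S) (hT : Measurable T)
    (h : IndepFun S T μ) {φ : ℝ → ℝ} (hc : Continuous φ) {C : ℝ} (hC : ∀ x, |φ x| ≤ C) :
    ∫ ω, φ (S ω + T ω) ∂μ = ∫ ω, (∫ ω', φ (S ω + T ω') ∂μ) ∂μ := by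
  have hmap : μ.map (fun ω => (S ω, T ω)) = (μ.map S).prod (μ.map T) :=
    (indepFun_iff_map_prod_eq_prod_map_map hS.aemeasurable hT.aemeasurable).mp h
  have hmS : IsProbabilityMeasure (μ.map S) := Measure.isProbabilityMeasure_map hS.aemeasurable
  have hmT : IsProbabilityMeasure (μ.map T) := Measure.isProbabilityMeasure_map hT.aemeasurable
  have hfm : Measurable (fun p : ℝ × ℝ => φ (p.1 + p.2)) :=
    hc.measurable.comp measurable_add
  have hint : Integrable (fun p : ℝ × ℝ => φ (p.1 + p.2)) ((μ.map S).prod (μ.map T)) := by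
    refine Integrable.mono' (integrable_const C) hfm.aestronglyMeasurable ?_
    filter_upwards with p
    simpa [Real.norm_eq_abs] using hC (p.1 + p.2)
  have h1 : ∫ ω, φ (S ω + T ω) ∂μ
      = ∫ p : ℝ × ℝ, φ (p.1 + p.2) ∂((μ.map S).prod (μ.map T)) := by
    rw [← hmap, integral_map (hS.aemeasurable.prodMk hT.aemeasurable)
      hfm.aestronglyMeasurable]
  have h2 : ∫ p : ℝ × ℝ, φ (p.1 + p.2) ∂((μ.map S).prod (μ.map T))
      = ∫ x, ∫ y, φ (x + y) ∂(μ.map T) ∂(μ.map S) := integral_prod _ hint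
  have h3 : ∀ x : ℝ, ∫ y, φ (x + y) ∂(μ.map T) = ∫ ω', φ (x + T ω') ∂μ := fun x => by
    have hcx : Continuous fun y : ℝ => φ (x + y) := by continuity
    rw [integral_map hT.aemeasurable hcx.aestronglyMeasurable]
  have h4 : ∫ x, ∫ y, φ (x + y) ∂(μ.map T) ∂(μ.map S)
      = ∫ ω, ∫ y, φ (S ω + y) ∂(μ.map T) ∂μ := by
    refine integral_map hS.aemeasurable ?_
    exact (StronglyMeasurable.integral_prod_right
      (f := fun x y => φ (x + y)) hfm.stronglyMeasurable).aestronglyMeasurable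
  rw [h1, h2, h4]
  exact integral_congr_ae (Filter.Eventually.of_forall fun ω => h3 (S ω))

/-- The second-order-dominance "smoothing" of a test function by averaging over
an independent summand is still a test function. -/
lemma isTest_average {T : Ω → ℝ} (hT : Measurable T) {φ : ℝ → ℝ} (h : IsTest φ) :
    IsTest (fun s => ∫ ω, φ (s + T ω) ∂μ) := by
  obtain ⟨hc, hm, hcc, C, hC⟩ := h
  have hint : ∀ s : ℝ, Integrable (fun ω => φ (s + T ω)) μ := fun s =>
    integrable_test (by continuity) (fun x => hC _) hT
  refine ⟨?_, ?_, ⟨convex_univ, ?_⟩, C, ?_⟩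
  · -- continuity by dominated convergence
    refine continuous_of_dominated (bound := fun _ => C) ?_ ?_ (integrable_const C) ?_
    · exact fun s => (hc.measurable.comp (measurable_const.add hT)).aestronglyMeasurable
    · intro s
      filter_upwards with ω
      simpa [Real.norm_eq_abs] using hC (s + T ω)
    · filter_upwards with ω
      exact hc.comp (continuous_id.add continuous_const)
  · intro s t hst
    refine integral_mono (hint s) (hint t) fun ω => hm (by linarith)
  · intro x _ y _ a c ha hc' hac
    simp only [smul_eq_mul]
    have key : ∀ ω, a * φ (x + T ω) + c * φ (y + T ω) ≤ φ (a * x + c * y + T ω) := by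
      intro ω
      have : a • (x + T ω) + c • (y + T ω) = a * x + c * y + T ω := by
        simp only [smul_eq_mul]; linear_combination (T ω) * hac
      calc a * φ (x + T ω) + c * φ (y + T ω)
          ≤ φ (a • (x + T ω) + c • (y + T ω)) := hcc.2 trivial trivial ha hc' hac
        _ = φ (a * x + c * y + T ω) := by rw [this]
    calc a * ∫ ω, φ (x + T ω) ∂μ + c * ∫ ω, φ (y + T ω) ∂μ
        = ∫ ω, (a * φ (x + T ω) + c * φ (y + T ω)) ∂μ := by
          rw [integral_add ((hint x).const_mul a) ((hint y).const_mul c),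
            integral_const_mul, integral_const_mul]
      _ ≤ ∫ ω, φ (a * x + c * y + T ω) ∂μ :=
          integral_mono (((hint x).const_mul a).add ((hint y).const_mul c))
            (hint (a * x + c * y)) key
  · intro s
    calc |∫ ω, φ (s + T ω) ∂μ| ≤ ∫ ω, |φ (s + T ω)| ∂μ := by
          simpa [Real.norm_eq_abs] using norm_integral_le_integral_norm (fun ω => φ (s + T ω))
      _ ≤ ∫ _ω, C ∂μ := integral_mono (hint s).abs (integrable_const C)
            fun ω => hC (s + T ω)
      _ = C := by simp

end aux

/-- Preservation of second-order stochastic dominance under nonnegative linear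
combinations of independent random variables: if `X₁, …, Xₙ` are mutually
independent nonnegative, `Y₁, …, Yₙ` are mutually independent nonnegative, and
`Xᵢ` second-order stochastically dominates `Yᵢ` for each `i` (tested against
bounded continuous monotone increasing concave functions), then `∑ βᵢ Xᵢ`
second-order stochastically dominates `∑ βᵢ Yᵢ` for all nonnegative weights `βᵢ`. -/
theorem ssd_preserved_under_nonneg_combination
    {Ω : Type*} [MeasurableSpace Ω] (μ : Measure Ω) [IsProbabilityMeasure μ]
    (n : ℕ) (X Y : Fin n → Ω → ℝ)
    (hXmeas : ∀ i, Measurable (X i)) (hYmeas : ∀ i, Measurable (Y i))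
    (hXnonneg : ∀ i ω, 0 ≤ X i ω) (hYnonneg : ∀ i ω, 0 ≤ Y i ω)
    (hXindep : iIndepFun X μ)
    (hYindep : iIndepFun Y μ)
    (hdom : ∀ i, ∀ φ : ℝ → ℝ, Continuous φ → Monotone φ → ConcaveOn ℝ Set.univ φ →
      (∃ C, ∀ x, |φ x| ≤ C) → ∫ ω, φ (X i ω) ∂μ ≥ ∫ ω, φ (Y i ω) ∂μ)
    (β : Fin n → ℝ) (hβ : ∀ i, 0 ≤ β i)
    (φ : ℝ → ℝ) (hφc : Continuous φ) (hφmono : Monotone φ)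
    (hφconc : ConcaveOn ℝ Set.univ φ) (hφbdd : ∃ C, ∀ x, |φ x| ≤ C) :
    ∫ ω, φ (∑ i, β i * X i ω) ∂μ ≥ ∫ ω, φ (∑ i, β i * Y i ω) ∂μ := by
  classical
  -- weighted variables
  set f : Fin n → Ω → ℝ := fun i ω => β i * X i ω with hf
  set g : Fin n → Ω → ℝ := fun i ω => β i * Y i ω with hg
  have hfmeas : ∀ i, Measurable (f i) := fun i => (hXmeas i).const_mul (β i)
  have hgmeas : ∀ i, Measurable (g i) := fun i => (hYmeas i).const_mul (β i)
  have hfindep : iIndepFun f μ :=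
    hXindep.comp (fun i x => β i * x) (fun i => measurable_const_mul (β i))
  have hgindep : iIndepFun g μ :=
    hYindep.comp (fun i x => β i * x) (fun i => measurable_const_mul (β i))
  -- the main induction over finite sets
  have main : ∀ s : Finset (Fin n), ∀ ψ : ℝ → ℝ, IsTest ψ →
      ∫ ω, ψ (∑ i ∈ s, f i ω) ∂μ ≥ ∫ ω, ψ (∑ i ∈ s, g i ω) ∂μ := by
    intro s
    induction s using Finset.induction_on with
    | empty => intro ψ _; simp
    | @insert a s has ih =>
      intro ψ hψ
      obtain ⟨hψc, hψm, hψcc, C, hC⟩ := hψ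
      have hSfx : Measurable (fun ω => ∑ i ∈ s, f i ω) := by
        apply Finset.measurable_sum
        exact fun i _ => hfmeas i
      have hSgy : Measurable (fun ω => ∑ i ∈ s, g i ω) := by
        apply Finset.measurable_sum
        exact fun i _ => hgmeas i
      have hsumf : (∑ j ∈ s, f j) = fun ω => ∑ i ∈ s, f i ω := by
        funext ω; simp [Finset.sum_apply]
      have hsumg : (∑ j ∈ s, g j) = fun ω => ∑ i ∈ s, g i ω := by
        funext ω; simp [Finset.sum_apply]
      have hindX : IndepFun (fun ω => ∑ i ∈ s, f i ω) (f a) μ := by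
        have := hfindep.indepFun_finsetSum_of_notMem hfmeas has
        rwa [hsumf] at this
      have hindY : IndepFun (fun ω => ∑ i ∈ s, g i ω) (g a) μ := by
        have := hgindep.indepFun_finsetSum_of_notMem hgmeas has
        rwa [hsumg] at this
      -- expand the insert sum
      have sumX : ∀ ω, ∑ i ∈ insert a s, f i ω = (∑ i ∈ s, f i ω) + f a ω := fun ω => by
        rw [Finset.sum_insert has]; ring
      have sumY : ∀ ω, ∑ i ∈ insert a s, g i ω = (∑ i ∈ s, g i ω) + g a ω := fun ω => by
        rw [Finset.sum_insert has]; ring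
      -- smoothed test functions
      set ψX : ℝ → ℝ := fun t => ∫ ω', ψ (t + f a ω') ∂μ with hψX
      set ψY : ℝ → ℝ := fun t => ∫ ω', ψ (t + g a ω') ∂μ with hψY
      have hψtest : IsTest ψ := ⟨hψc, hψm, hψcc, C, hC⟩
      have hψXtest : IsTest ψX := isTest_average (hfmeas a) hψtest
      have hψYtest : IsTest ψY := isTest_average (hgmeas a) hψtest
      -- step 1: rewrite both sides via independence
      have eqX : ∫ ω, ψ (∑ i ∈ insert a s, f i ω) ∂μ = ∫ ω, ψX (∑ i ∈ s, f i ω) ∂μ := by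
        simp_rw [sumX]
        exact indep_integral_add hSfx (hfmeas a) hindX hψc hC
      have eqY : ∫ ω, ψ (∑ i ∈ insert a s, g i ω) ∂μ = ∫ ω, ψY (∑ i ∈ s, g i ω) ∂μ := by
        simp_rw [sumY]
        exact indep_integral_add hSgy (hgmeas a) hindY hψc hC
      -- step 2: pointwise dominance ψX ≥ ψY, via `hdom a`
      have hpt : ∀ t, ψY t ≤ ψX t := by
        intro t
        have htest : IsTest (fun x => ψ (t + β a * x)) :=
          isTest_comp_affine hψtest t (β a) (hβ a)
        obtain ⟨hc', hm', hcc', hb'⟩ := htest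
        exact hdom a (fun x => ψ (t + β a * x)) hc' hm' hcc' hb'
      -- combine
      rw [eqX, eqY]
      obtain ⟨CX, hCX⟩ := hψXtest.2.2.2
      obtain ⟨CY, hCY⟩ := hψYtest.2.2.2
      calc ∫ ω, ψY (∑ i ∈ s, g i ω) ∂μ
          ≤ ∫ ω, ψY (∑ i ∈ s, f i ω) ∂μ := ih ψY hψYtest
        _ ≤ ∫ ω, ψX (∑ i ∈ s, f i ω) ∂μ := by
            refine integral_mono (integrable_test hψYtest.1 hCY hSfx)
              (integrable_test hψXtest.1 hCX hSfx) fun ω => hpt _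
  have := main Finset.univ φ ⟨hφc, hφmono, hφconc, hφbdd⟩
  simpa using this
end

section
/- Let X_1, …, X_n be i.i.d. nonnegative real random variables on a probability space, let B_1, …, B_n be nonnegative integers with Σ_{j=1}^n B_j = n, and let s ≥ 0. Then E[exp(−(s/n) · Σ_{j=1}^n B_j X_j)] ≥ E[exp(−(s/n) · Σ_{j=1}^n X_j)]. -/
open MeasureTheory ProbabilityTheory

/-- Jensen step: for a nonneg bounded-by-1 measurable `Z`, `(∫ Z)^k ≤ ∫ Z^k`. -/
lemma pow_integral_le {Ω : Type*} [MeasurableSpace Ω] (μ : Measure Ω)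
    [IsProbabilityMeasure μ] (Z : Ω → ℝ) (hZm : Measurable Z)
    (hZ0 : ∀ ω, 0 ≤ Z ω) (hZ1 : ∀ ω, Z ω ≤ 1) (k : ℕ) :
    (∫ ω, Z ω ∂μ) ^ k ≤ ∫ ω, (Z ω) ^ k ∂μ := by
  have hZi : Integrable Z μ := by
    refine (integrable_const (1 : ℝ)).mono' hZm.aestronglyMeasurable ?_
    filter_upwards with ω
    rw [Real.norm_eq_abs, abs_of_nonneg (hZ0 ω)]; exact hZ1 ω
  have hZki : Integrable (fun ω => (Z ω) ^ k) μ := by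
    refine (integrable_const (1 : ℝ)).mono' (hZm.pow_const k).aestronglyMeasurable ?_
    filter_upwards with ω
    rw [Real.norm_eq_abs, abs_of_nonneg (pow_nonneg (hZ0 ω) k)]
    exact pow_le_one₀ (hZ0 ω) (hZ1 ω)
  have := (convexOn_pow k).map_integral_le (μ := μ) (f := Z)
    (continuous_pow k).continuousOn isClosed_Ici
    (Filter.Eventually.of_forall fun ω => hZ0 ω) hZi hZki
  simpa using this

/-- Single-cluster content of Lemma 4: for i.i.d. nonnegative random variables
`X₁, …, Xₙ`, nonnegative integers `B₁, …, Bₙ` with `∑ Bⱼ = n`, and `s ≥ 0`,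
`E[exp (−(s/n) ∑ Bⱼ Xⱼ)] ≥ E[exp (−(s/n) ∑ Xⱼ)]`. -/
theorem laplace_integer_weights_ge
    {Ω : Type*} [MeasurableSpace Ω] (μ : Measure Ω) [IsProbabilityMeasure μ]
    (n : ℕ) (hn : 0 < n) (X : Fin n → Ω → ℝ)
    (hXmeas : ∀ j, Measurable (X j)) (hXnonneg : ∀ j ω, 0 ≤ X j ω)
    (hindep : iIndepFun X μ)
    (hident : ∀ i j, IdentDistrib (X i) (X j) μ μ)
    (B : Fin n → ℕ) (hB : ∑ j, B j = n)
    (s : ℝ) (hs : 0 ≤ s) :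
    ∫ ω, Real.exp (-((s / n) * ∑ j, (B j : ℝ) * X j ω)) ∂μ
      ≥ ∫ ω, Real.exp (-((s / n) * ∑ j, X j ω)) ∂μ := by
  set t : ℝ := -(s / n) with ht
  have htle : t ≤ 0 := by
    rw [ht]
    exact neg_nonpos_of_nonneg (div_nonneg hs (Nat.cast_nonneg n))
  set j0 : Fin n := ⟨0, hn⟩
  -- mgf of X j equals mgf of X j0 for any argument
  have hmgf_eq : ∀ (j : Fin n) (u : ℝ), mgf (X j) μ u = mgf (X j0) μ u := by
    intro j u
    have hg : Measurable fun x : ℝ => Real.exp (u * x) := by fun_prop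
    exact ((hident j j0).comp hg).integral_eq
  -- the i.i.d. base value
  set m : ℝ := mgf (X j0) μ t with hm
  have hm0 : 0 ≤ m := mgf_nonneg
  -- LHS as product of mgfs
  have hY : iIndepFun (fun j ω => (B j : ℝ) * X j ω) μ := by
    exact hindep.comp (fun j x => (B j : ℝ) * x)
      (fun j => measurable_const_mul _)
  have hYmeas : ∀ j, Measurable (fun ω => (B j : ℝ) * X j ω) :=
    fun j => (hXmeas j).const_mul _
  have hLHS : ∫ ω, Real.exp (t * ∑ j, (B j : ℝ) * X j ω) ∂μ
      = ∏ j, mgf (X j) μ (t * B j) := by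
    have := hY.mgf_sum (t := t) hYmeas Finset.univ
    rw [mgf] at this
    simp only [Finset.sum_apply] at this
    rw [this]
    refine Finset.prod_congr rfl fun j _ => ?_
    simp only [mgf]
    congr 1
    ext ω
    ring_nf
  have hRHS : ∫ ω, Real.exp (t * ∑ j, X j ω) ∂μ = ∏ j, mgf (X j) μ t := by
    have := hindep.mgf_sum (t := t) hXmeas Finset.univ
    rw [mgf] at this
    simp only [Finset.sum_apply] at this
    exact this
  -- Jensen: mgf (X j0) (t * k) ≥ m ^ k
  have hkey : ∀ k : ℕ, m ^ k ≤ mgf (X j0) μ (t * k) := by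
    intro k
    set Z : Ω → ℝ := fun ω => Real.exp (t * X j0 ω) with hZ
    have hZm : Measurable Z := ((hXmeas j0).const_mul t).exp
    have hZ0 : ∀ ω, 0 ≤ Z ω := fun ω => (Real.exp_pos _).le
    have hZ1 : ∀ ω, Z ω ≤ 1 := by
      intro ω
      rw [hZ, Real.exp_le_one_iff]
      exact mul_nonpos_of_nonpos_of_nonneg htle (hXnonneg j0 ω)
    have := pow_integral_le μ Z hZm hZ0 hZ1 k
    calc m ^ k = (∫ ω, Z ω ∂μ) ^ k := by rw [hm, mgf]
      _ ≤ ∫ ω, (Z ω) ^ k ∂μ := this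
      _ = mgf (X j0) μ (t * k) := by
          rw [mgf]
          congr 1
          ext ω
          rw [hZ, ← Real.exp_nat_mul]
          ring_nf
  have hmain : ∏ j, mgf (X j) μ t ≤ ∏ j, mgf (X j) μ (t * B j) := by
    calc ∏ j, mgf (X j) μ t = m ^ n := by
          simp_rw [fun j => hmgf_eq j t, ← hm]
          rw [Finset.prod_const, Finset.card_univ, Fintype.card_fin]
      _ = ∏ j, m ^ B j := by rw [Finset.prod_pow_eq_pow_sum, hB]
      _ ≤ ∏ j, mgf (X j) μ (t * B j) := by
          refine Finset.prod_le_prod (fun j _ => pow_nonneg hm0 _) fun j _ => ?_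
          rw [hmgf_eq j]
          exact hkey (B j)
  calc ∫ ω, Real.exp (-((s / n) * ∑ j, X j ω)) ∂μ
      = ∫ ω, Real.exp (t * ∑ j, X j ω) ∂μ := by simp [ht]
    _ = ∏ j, mgf (X j) μ t := hRHS
    _ ≤ ∏ j, mgf (X j) μ (t * B j) := hmain
    _ = ∫ ω, Real.exp (t * ∑ j, (B j : ℝ) * X j ω) ∂μ := hLHS.symm
    _ = ∫ ω, Real.exp (-((s / n) * ∑ j, (B j : ℝ) * X j ω)) ∂μ := by simp [ht]
end
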